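/- Any (ρ,σ)-good set for a coloring f : [λ]^2 → k has order type exactly ρ^n, where n is the length of σ and exponentiation is ordinal exponentiation. -/

import Mathlib

open Cardinal Ordinal

/-- The order type of a set of ordinals (an `Ordinal.{1}` for universe reasons). -/
noncomputable def otype (s : Set Ordinal.{0}) : Ordinal.{1} :=
  Ordinal.type (Subrel ((· < ·) : Ordinal → Ordinal → Prop) (· ∈ s))

/-- `OT s o` means the set of ordinals `s` has order type `o`. -/
def OT (s : Set Ordinal.{0}) (o : Ordinal.{0}) : Prop := otype s = Ordinal.lift.{1,0} o

/-- `2^{<κ} = sup { 2^μ : μ < κ }`. -/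
noncomputable def twoLT (κ : Cardinal.{0}) : Cardinal.{0} := ⨆ μ : Set.Iio κ, 2 ^ (μ : Cardinal)

/-- `X` is `i`-homogeneous for the pair coloring `f`. -/
def Homog {α : Type*} (f : Ordinal → Ordinal → α) (X : Set Ordinal) (i : α) : Prop :=
  ∀ a ∈ X, ∀ b ∈ X, a < b → f a b = i

/-- `Good f ρ σ x`: `x` is `(ρ,σ)`-good for the coloring `f`.  A singleton is `(ρ,⟨⟩)`-good;
`x` is `(ρ, σ⌢⟨i⟩)`-good iff `x = ⋃_{ξ<ρ} x_ξ` with each `x_ξ` `(ρ,σ)`-good,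
`sup x_ξ < inf x_η` for `ξ < η`, and all cross pairs colored `i`. -/
inductive Good (f : Ordinal → Ordinal → ℕ) (ρ : Ordinal.{0}) : List ℕ → Set Ordinal.{0} → Prop
  | nil (a : Ordinal) : Good f ρ [] {a}
  | cons (σ : List ℕ) (i : ℕ) (x : Ordinal → Set Ordinal)
      (hgood : ∀ ξ < ρ, Good f ρ σ (x ξ))
      (hsep : ∀ ξ < ρ, ∀ η < ρ, ξ < η → sSup (x ξ) < sInf (x η))
      (hcol : ∀ ξ < ρ, ∀ η < ρ, ξ < η → ∀ a ∈ x ξ, ∀ b ∈ x η, f a b = i) :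
      Good f ρ (σ ++ [i]) (⋃ ξ ∈ Set.Iio ρ, x ξ)

theorem good_bddAbove {f : Ordinal → Ordinal → ℕ} {ρ : Ordinal.{0}} {σ : List ℕ}
    {x : Set Ordinal} (h : Good f ρ σ x) : BddAbove x := by
  induction h with
  | nil a => exact bddAbove_singleton
  | cons σ i x hgood hsep hcol IH =>
    rw [Ordinal.bddAbove_iff_small]
    have : ∀ ξ ∈ Set.Iio ρ, Small.{0} (x ξ) := fun ξ hξ =>
      Ordinal.bddAbove_iff_small.1 (IH ξ hξ)
    exact @small_biUnion _ _ (Set.Iio ρ) _ (fun ξ _ => x ξ) this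

theorem good_enum {f : Ordinal → Ordinal → ℕ} {ρ : Ordinal.{0}} {σ : List ℕ}
    {x : Set Ordinal} (h : Good f ρ σ x) :
    ∃ g : Ordinal → Ordinal, StrictMonoOn g (Set.Iio (ρ ^ (σ.length : Ordinal))) ∧
      g '' Set.Iio (ρ ^ (σ.length : Ordinal)) = x := by
  induction h with
  | nil a =>
    refine ⟨fun _ => a, ?_, ?_⟩
    · intro b hb c hc hbc
      simp only [Set.mem_Iio, List.length_nil, Nat.cast_zero, opow_zero,
        Ordinal.lt_one_iff_zero] at hb hc
      subst hb; subst hc; exact absurd hbc (lt_irrefl 0)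
    · exact Set.Nonempty.image_const ⟨0, by simp⟩ a
  | cons σ i x hgood hsep hcol IH =>
    have hlen : (((σ ++ [i]).length : ℕ) : Ordinal) = (σ.length : Ordinal) + 1 := by
      simp
    have hopow : ρ ^ (((σ ++ [i]).length : ℕ) : Ordinal)
        = ρ ^ (σ.length : Ordinal) * ρ := by
      rw [hlen, opow_add, opow_one]
    rcases eq_or_ne ρ 0 with hρ | hρ
    · subst hρ
      refine ⟨fun _ => 0, ?_, ?_⟩
      · intro b hb
        simp only [hopow, mul_zero, Set.mem_Iio] at hb
        exact absurd hb (not_lt_of_ge (zero_le (a := b)))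
      · rw [hopow, mul_zero]
        simp [Set.eq_empty_iff_forall_notMem]
    set c : Ordinal := ρ ^ (σ.length : Ordinal) with hc
    have hc0 : c ≠ 0 := opow_ne_zero _ hρ
    have IH' : ∀ ξ : Ordinal, ∃ g : Ordinal → Ordinal, ξ < ρ →
        StrictMonoOn g (Set.Iio c) ∧ g '' Set.Iio c = x ξ := by
      intro ξ
      by_cases hξ : ξ < ρ
      · obtain ⟨g, hg⟩ := IH ξ hξ
        exact ⟨g, fun _ => hg⟩
      · exact ⟨fun _ => 0, fun h' => absurd h' hξ⟩
    choose g hg using IH'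
    have hmono : ∀ ξ < ρ, StrictMonoOn (g ξ) (Set.Iio c) := fun ξ hξ => (hg ξ hξ).1
    have himg : ∀ ξ < ρ, g ξ '' Set.Iio c = x ξ := fun ξ hξ => (hg ξ hξ).2
    have hmem : ∀ ξ < ρ, ∀ δ < c, g ξ δ ∈ x ξ := by
      intro ξ hξ δ hδ
      rw [← himg ξ hξ]
      exact Set.mem_image_of_mem _ hδ
    refine ⟨fun β => g (β / c) (β % c), ?_, ?_⟩
    · rw [hopow]
      intro β1 hβ1 β2 hβ2 hlt
      simp only [Set.mem_Iio] at hβ1 hβ2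
      have hd1 : β1 / c < ρ := (Ordinal.div_lt hc0).2 hβ1
      have hd2 : β2 / c < ρ := (Ordinal.div_lt hc0).2 hβ2
      have hm1 : β1 % c < c := Ordinal.mod_lt _ hc0
      have hm2 : β2 % c < c := Ordinal.mod_lt _ hc0
      have hle : β1 / c ≤ β2 / c := by
        by_contra hcon
        push_neg at hcon
        have h1 : β2 < c * (β2 / c) + c := Ordinal.lt_mul_div_add β2 hc0
        have h2 : c * (β2 / c) + c = c * Order.succ (β2 / c) := (Ordinal.mul_succ _ _).symm
        have h3 : c * Order.succ (β2 / c) ≤ c * (β1 / c) :=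
          mul_le_mul_right (Order.succ_le_of_lt hcon) c
        have h4 : c * (β1 / c) ≤ β1 := Ordinal.mul_div_le _ _
        exact absurd (h1.trans_le ((h2 ▸ h3).trans h4)) (not_lt.2 hlt.le)
      rcases lt_or_eq_of_le hle with hdlt | hdeq
      · have ha : g (β1 / c) (β1 % c) ∈ x (β1 / c) := hmem _ hd1 _ hm1
        have hb : g (β2 / c) (β2 % c) ∈ x (β2 / c) := hmem _ hd2 _ hm2
        calc g (β1 / c) (β1 % c) ≤ sSup (x (β1 / c)) :=
              le_csSup (good_bddAbove (hgood _ hd1)) ha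
          _ < sInf (x (β2 / c)) := hsep _ hd1 _ hd2 hdlt
          _ ≤ g (β2 / c) (β2 % c) := csInf_le (OrderBot.bddBelow _) hb
      · show g (β1 / c) (β1 % c) < g (β2 / c) (β2 % c)
        rw [hdeq]
        apply hmono _ hd2 hm1 hm2
        have e1 : c * (β1 / c) + β1 % c = β1 := Ordinal.div_add_mod _ _
        have e2 : c * (β2 / c) + β2 % c = β2 := Ordinal.div_add_mod _ _
        rw [hdeq] at e1
        have : c * (β2 / c) + β1 % c < c * (β2 / c) + β2 % c := by
          rw [e1, e2]; exact hlt
        exact (add_lt_add_iff_left _).1 this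
    · rw [hopow]
      apply Set.eq_of_subset_of_subset
      · rintro _ ⟨β, hβ, rfl⟩
        simp only [Set.mem_Iio] at hβ
        have hd : β / c < ρ := (Ordinal.div_lt hc0).2 hβ
        have hm : β % c < c := Ordinal.mod_lt _ hc0
        exact Set.mem_biUnion hd (hmem _ hd _ hm)
      · intro b hb
        simp only [Set.mem_iUnion, Set.mem_Iio] at hb
        obtain ⟨ξ, hξ, hbξ⟩ := hb
        rw [← himg ξ hξ] at hbξ
        obtain ⟨δ, hδ, rfl⟩ := hbξ
        simp only [Set.mem_Iio] at hδ
        refine ⟨c * ξ + δ, ?_, ?_⟩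
        · have h1 : c * ξ + δ < c * ξ + c := (add_lt_add_iff_left _).2 hδ
          have h2 : c * ξ + c = c * Order.succ ξ := (Ordinal.mul_succ _ _).symm
          have h3 : c * Order.succ ξ ≤ c * ρ := mul_le_mul_right (Order.succ_le_of_lt hξ) c
          exact Set.mem_Iio.2 (h1.trans_le (h2 ▸ h3))
        · show g ((c * ξ + δ) / c) ((c * ξ + δ) % c) = g ξ δ
          have hdiv : (c * ξ + δ) / c = ξ := by
            rw [Ordinal.mul_add_div _ hc0, Ordinal.div_eq_zero_of_lt hδ, add_zero]
          have hmod : (c * ξ + δ) % c = δ := by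
            rw [Ordinal.mul_add_mod_self, Ordinal.mod_eq_of_lt hδ]
          rw [hdiv, hmod]


/-- Any `(ρ,σ)`-good set has order type exactly `ρ ^ (length σ)` (ordinal exponentiation). -/
theorem good_otype (lam : Ordinal.{0}) (k : ℕ) (f : Ordinal → Ordinal → ℕ)
    (hf : ∀ a b, f a b < k) (ρ : Ordinal.{0}) (σ : List ℕ)
    (x : Set Ordinal) (hx : x ⊆ Set.Iio lam) (hgood : Good f ρ σ x) :
    OT x (ρ ^ (σ.length : Ordinal)) := by
  obtain ⟨g, hmono, himg⟩ := good_enum hgood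
  set o : Ordinal := ρ ^ (σ.length : Ordinal) with ho
  have hmaps : ∀ β : Set.Iio o, g β.1 ∈ x := by
    intro ⟨β, hβ⟩
    rw [← himg]
    exact Set.mem_image_of_mem _ hβ
  have hinj : Function.Injective (fun β : Set.Iio o => (⟨g β.1, hmaps β⟩ : x)) := by
    rintro ⟨a, ha⟩ ⟨b, hb⟩ hab
    simp only [Subtype.mk.injEq] at hab ⊢
    rcases lt_trichotomy a b with h | h | h
    · exact absurd hab (hmono ha hb h).ne
    · exact h
    · exact absurd hab.symm (hmono hb ha h).ne
  have hsurj : Function.Surjective (fun β : Set.Iio o => (⟨g β.1, hmaps β⟩ : x)) := by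
    rintro ⟨b, hb⟩
    rw [← himg] at hb
    obtain ⟨β, hβ, rfl⟩ := hb
    exact ⟨⟨β, hβ⟩, rfl⟩
  have e : Subrel ((· < ·) : Ordinal → Ordinal → Prop) (· ∈ Set.Iio o) ≃r
      Subrel ((· < ·) : Ordinal → Ordinal → Prop) (· ∈ x) := by
    refine ⟨Equiv.ofBijective _ ⟨hinj, hsurj⟩, ?_⟩
    rintro ⟨a, ha⟩ ⟨b, hb⟩
    show g a < g b ↔ a < b
    constructor
    · intro h
      rcases lt_trichotomy a b with h' | h' | h'
      · exact h'
      · subst h'; exact absurd h (lt_irrefl _)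
      · exact absurd (hmono hb ha h') (not_lt.2 h.le)
    · exact fun h => hmono ha hb h
  have h1 : otype x = otype (Set.Iio o) := (e.ordinal_type_eq).symm
  have h2 : otype (Set.Iio o) = Ordinal.lift.{1,0} o := by
    show Ordinal.type (Subrel ((· < ·) : Ordinal → Ordinal → Prop) (· < o)) = _
    rw [Ordinal.type_subrel, Ordinal.typein_ordinal]
  exact h1.trans h2
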